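/- Let Q be the field (or skew field) of fractions of R = Z_p[[X]] and σ the automorphism of Q extending X ↦ (1+X)^ε − 1 with ε ∈ 1 + pZ_p, ε ≠ 1. Then the skew Laurent polynomial ring Q[Z, Z^{-1}; σ] is a simple ring (has no nonzero proper two-sided ideals). -/

import Mathlib

/-- A skew Laurent polynomial ring `L = Q[Z, Z⁻¹; σ]`: additively `L` is the group of
finitely supported `ℤ`-indexed sequences of coefficients (via `coeff`), `C` is the
inclusion of constants, `Z` an invertible variable, `C q * Z ^ k` (for `k : ℤ`) the
monomial `q Zᵏ`, and multiplication is governed by `Z·q = σ(q)·Z`. -/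
structure SkewLaurent (Q L : Type*) [Ring Q] [Ring L] (σ : Q → Q) where
  coeff : L ≃+ (ℤ →₀ Q)
  C : Q →+* L
  Z : Lˣ
  coeff_monomial : ∀ (q : Q) (k : ℤ), coeff (C q * ((Z ^ k : Lˣ) : L)) = Finsupp.single k q
  Z_mul_C : ∀ q : Q, (Z : L) * C q = C (σ q) * (Z : L)

section Aux
variable {Q L : Type*} [Field Q] [Ring L] (σ : Q ≃+* Q) (S : SkewLaurent Q L ⇑σ)

lemma sk_mul_apply (a b : Q ≃+* Q) (x : Q) : (a * b) x = a (b x) := rfl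

lemma sk_coe_pow (n : ℕ) : ⇑((σ ^ n : Q ≃+* Q)) = (⇑σ)^[n] := by
  induction n with
  | zero => rfl
  | succ n ih =>
      rw [pow_succ, Function.iterate_succ]
      ext q
      rw [sk_mul_apply]
      simp [ih]

lemma sk_zpow_mul_C (k : ℤ) :
    ∀ q : Q, ((S.Z ^ k : Lˣ) : L) * S.C q = S.C ((σ ^ k : Q ≃+* Q) q) * ((S.Z ^ k : Lˣ) : L) := by
  induction k using Int.induction_on with
  | zero => intro q; simp
  | succ n ih =>
      intro q
      have h1 : (S.Z ^ ((n : ℤ) + 1) : Lˣ) = S.Z ^ (n : ℤ) * S.Z := by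
        rw [zpow_add_one]
      rw [h1, Units.val_mul, mul_assoc, S.Z_mul_C, ← mul_assoc, ih (σ q), mul_assoc]
      congr 2
  | pred n ih =>
      intro q
      have h1 : (S.Z ^ ((-n : ℤ) - 1) : Lˣ) = S.Z ^ (-n : ℤ) * S.Z⁻¹ := by
        rw [zpow_sub_one]
      have hinv : ((S.Z⁻¹ : Lˣ) : L) * S.C q = S.C (σ.symm q) * ((S.Z⁻¹ : Lˣ) : L) := by
        have h2 := S.Z_mul_C (σ.symm q)
        rw [RingEquiv.apply_symm_apply] at h2
        calc ((S.Z⁻¹:Lˣ):L) * S.C q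
            = ((S.Z⁻¹:Lˣ):L) * ((S.Z:L) * S.C (σ.symm q) * ((S.Z⁻¹:Lˣ):L)) := by
              rw [h2, mul_assoc, ← Units.val_mul, mul_inv_cancel, Units.val_one, mul_one]
          _ = S.C (σ.symm q) * ((S.Z⁻¹:Lˣ):L) := by
              rw [← mul_assoc, ← mul_assoc, ← Units.val_mul, inv_mul_cancel, Units.val_one, one_mul]
      rw [h1, Units.val_mul, mul_assoc, hinv, ← mul_assoc, ih (σ.symm q), mul_assoc]
      congr 1
      rw [zpow_sub_one, sk_mul_apply]
      rfl

lemma sk_decomp (x : L) :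
    x = ∑ k ∈ (S.coeff x).support, S.C (S.coeff x k) * ((S.Z ^ k : Lˣ) : L) := by
  apply S.coeff.injective
  rw [map_sum]
  simp only [S.coeff_monomial]
  exact (Finsupp.sum_single (S.coeff x)).symm

lemma sk_coeff_C_mul (q : Q) (x : L) (j : ℤ) :
    S.coeff (S.C q * x) j = q * S.coeff x j := by
  conv_lhs => rw [sk_decomp σ S x]
  rw [Finset.mul_sum]
  simp only [← mul_assoc, ← map_mul]
  rw [map_sum]
  simp only [S.coeff_monomial]
  rw [Finset.sum_apply']
  simp only [Finsupp.single_apply]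
  rw [Finset.sum_ite_eq' (S.coeff x).support j]
  by_cases hj : j ∈ (S.coeff x).support
  · simp [hj]
  · simp [hj, Finsupp.notMem_support_iff.mp hj]

lemma sk_coeff_mul_C (q : Q) (x : L) (j : ℤ) :
    S.coeff (x * S.C q) j = S.coeff x j * (σ ^ j : Q ≃+* Q) q := by
  conv_lhs => rw [sk_decomp σ S x]
  rw [Finset.sum_mul]
  have : ∀ k ∈ (S.coeff x).support,
      S.C (S.coeff x k) * ((S.Z ^ k : Lˣ) : L) * S.C q
        = S.C (S.coeff x k * (σ ^ k : Q ≃+* Q) q) * ((S.Z ^ k : Lˣ) : L) := by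
    intro k _
    rw [mul_assoc, sk_zpow_mul_C σ S, ← mul_assoc, ← map_mul]
  rw [Finset.sum_congr rfl this, map_sum]
  simp only [S.coeff_monomial]
  rw [Finset.sum_apply']
  simp only [Finsupp.single_apply]
  rw [Finset.sum_ite_eq' (S.coeff x).support j]
  by_cases hj : j ∈ (S.coeff x).support
  · simp [hj]
  · simp [hj, Finsupp.notMem_support_iff.mp hj]

lemma sk_coeff_mul_Z (m : ℤ) (x : L) (j : ℤ) :
    S.coeff (x * ((S.Z ^ m : Lˣ) : L)) j = S.coeff x (j - m) := by
  conv_lhs => rw [sk_decomp σ S x]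
  rw [Finset.sum_mul]
  have : ∀ k ∈ (S.coeff x).support,
      S.C (S.coeff x k) * ((S.Z ^ k : Lˣ) : L) * ((S.Z ^ m : Lˣ) : L)
        = S.C (S.coeff x k) * ((S.Z ^ (k + m) : Lˣ) : L) := by
    intro k _
    rw [mul_assoc, ← Units.val_mul, ← zpow_add]
  rw [Finset.sum_congr rfl this, map_sum]
  simp only [S.coeff_monomial]
  rw [Finset.sum_apply']
  simp only [Finsupp.single_apply]
  have : ∀ k : ℤ, (k + m = j) = (k = j - m) := by intro k; simp [eq_sub_iff_add_eq]
  simp only [this]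
  rw [Finset.sum_ite_eq' (S.coeff x).support (j - m)]
  by_cases hj : j - m ∈ (S.coeff x).support
  · simp [hj]
  · simp [hj, Finsupp.notMem_support_iff.mp hj]

end Aux

section Main
variable {Q L : Type*} [Field Q] [Ring L] (σ : Q ≃+* Q) (S : SkewLaurent Q L ⇑σ)

lemma sk_zpow_pos_ne (γ : Q)
    (h : ∀ m n : ℕ, m ≠ n → (⇑σ)^[m] γ ≠ (⇑σ)^[n] γ) :
    ∀ d : ℤ, 0 < d → (σ ^ d : Q ≃+* Q) γ ≠ γ := by
  intro d hd heq
  lift d to ℕ using le_of_lt hd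
  rw [zpow_natCast, sk_coe_pow] at heq
  exact h d 0 (by exact_mod_cast hd.ne') (by simpa using heq)

lemma sk_zpow_ne (γ : Q)
    (h : ∀ m n : ℕ, m ≠ n → (⇑σ)^[m] γ ≠ (⇑σ)^[n] γ) :
    ∀ k m : ℤ, k ≠ m → (σ ^ k : Q ≃+* Q) γ ≠ (σ ^ m : Q ≃+* Q) γ := by
  intro k m hne heq
  have key : (σ ^ (k - m) : Q ≃+* Q) γ = γ := by
    have h2 := congrArg (σ ^ (-m) : Q ≃+* Q) heq
    rw [← sk_mul_apply, ← sk_mul_apply, ← zpow_add, ← zpow_add, neg_add_cancel,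
      zpow_zero, neg_add_eq_sub] at h2
    exact h2.trans rfl
  rcases lt_trichotomy (k - m) 0 with hlt | h0 | hgt
  · have : (σ ^ (m - k) : Q ≃+* Q) γ = γ := by
      have h3 := congrArg (σ ^ (m - k) : Q ≃+* Q) key
      rw [← sk_mul_apply, ← zpow_add, sub_add_sub_cancel', sub_self, zpow_zero] at h3
      exact h3.symm.trans rfl
    exact sk_zpow_pos_ne σ γ h (m - k) (by omega) this
  · exact hne (by omega)
  · exact sk_zpow_pos_ne σ γ h (k - m) hgt key

lemma sk_one_mem (γ : Q)
    (hγ : ∀ k m : ℤ, k ≠ m → (σ ^ k : Q ≃+* Q) γ ≠ (σ ^ m : Q ≃+* Q) γ)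
    (I : Ideal L) (hIright : ∀ x ∈ I, ∀ b : L, x * b ∈ I) :
    ∀ n : ℕ, ∀ x : L, x ∈ I → x ≠ 0 → (S.coeff x).support.card ≤ n → (1 : L) ∈ I := by
  intro n
  induction n with
  | zero =>
      intro x hx hx0 hcard
      exfalso
      apply hx0
      have : S.coeff x = 0 := by
        rw [← Finsupp.support_eq_empty, ← Finset.card_eq_zero]
        omega
      have := congrArg S.coeff.symm this
      simpa using this
  | succ n ih =>
      intro x hxI hx0 hcard
      have hFx : S.coeff x ≠ 0 := fun h => hx0 (by simpa using congrArg S.coeff.symm h)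
      obtain ⟨k₀, hk₀⟩ := Finsupp.support_nonempty_iff.mpr hFx
      set y : L := S.C ((σ ^ k₀ : Q ≃+* Q) γ) * x - x * S.C γ with hy
      have hyI : y ∈ I := I.sub_mem (I.mul_mem_left _ hxI) (hIright x hxI _)
      have hycoeff : ∀ j : ℤ, S.coeff y j
          = S.coeff x j * ((σ ^ k₀ : Q ≃+* Q) γ - (σ ^ j : Q ≃+* Q) γ) := by
        intro j
        rw [hy, map_sub, Finsupp.sub_apply, sk_coeff_C_mul, sk_coeff_mul_C]
        ring
      by_cases hy0 : y = 0
      · -- x is a single monomial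
        set a : Q := S.coeff x k₀ with ha
        have ha0 : a ≠ 0 := Finsupp.mem_support_iff.mp hk₀
        have hsingle : S.coeff x = Finsupp.single k₀ a := by
          ext j
          by_cases hj : j = k₀
          · subst hj; rw [Finsupp.single_eq_same]
          · have h0 : S.coeff x j * ((σ ^ k₀ : Q ≃+* Q) γ - (σ ^ j : Q ≃+* Q) γ) = 0 := by
              rw [← hycoeff j, hy0]; simp
            have hne : (σ ^ k₀ : Q ≃+* Q) γ - (σ ^ j : Q ≃+* Q) γ ≠ 0 :=
              sub_ne_zero.mpr (hγ k₀ j (fun h => hj h.symm))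
            have hz := (mul_eq_zero.mp h0).resolve_right hne
            rw [hz, Finsupp.single_eq_of_ne' (fun h => hj h.symm)]
        have hxeq : x = S.C a * ((S.Z ^ k₀ : Lˣ) : L) := by
          apply S.coeff.injective
          rw [S.coeff_monomial, hsingle]
        have hZZ : ((S.Z ^ k₀ : Lˣ) : L) * ((S.Z ^ (-k₀) : Lˣ) : L) = 1 := by
          rw [← Units.val_mul, ← zpow_add, add_neg_cancel, zpow_zero, Units.val_one]
        have hone : S.C a⁻¹ * x * ((S.Z ^ (-k₀) : Lˣ) : L) = 1 := by
          rw [hxeq, ← mul_assoc, ← map_mul, inv_mul_cancel₀ ha0, map_one, one_mul, hZZ]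
        have hmem := hIright (S.C a⁻¹ * x) (I.mul_mem_left _ hxI) ((S.Z ^ (-k₀) : Lˣ) : L)
        rwa [hone] at hmem
      · -- induction step
        have hsupp : (S.coeff y).support ⊆ (S.coeff x).support.erase k₀ := by
          intro j hj
          rw [Finsupp.mem_support_iff] at hj
          rw [Finset.mem_erase, Finsupp.mem_support_iff]
          constructor
          · rintro rfl; exact hj (by rw [hycoeff]; simp)
          · intro hj0; exact hj (by rw [hycoeff, hj0, zero_mul])
        have hcard' : (S.coeff y).support.card ≤ n := by
          have h1 := Finset.card_le_card hsupp
          have h2 : ((S.coeff x).support.erase k₀).card = (S.coeff x).support.card - 1 :=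
            Finset.card_erase_of_mem hk₀
          have h3 : 0 < (S.coeff x).support.card := Finset.card_pos.mpr ⟨k₀, hk₀⟩
          omega
        exact ih y hyI hy0 hcard'

end Main

/-- Let `Q` be the field of fractions of `R = ℤ_p[[X]]` and `σ` the
automorphism of `Q` extending `X ↦ (1+X)^ε − 1` with `ε ∈ 1 + pℤ_p`, `ε ≠ 1`
(axiomatized: `σ` preserves `R` inside `Q` and the iterates `σⁱ(γ)` of the unit
`γ = 1 + X` are pairwise distinct).  Then the skew Laurent polynomial ring
`Q[Z, Z⁻¹; σ]` is a simple ring: it has no two-sided ideals other than `0` and the whole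
ring. -/
theorem skewLaurent_isSimpleRing
    (p : ℕ) [Fact p.Prime]
    (σ : FractionRing (PowerSeries ℤ_[p]) ≃+* FractionRing (PowerSeries ℤ_[p]))
    (hσR : ∀ r : PowerSeries ℤ_[p], ∃ r' : PowerSeries ℤ_[p],
      σ (algebraMap (PowerSeries ℤ_[p]) (FractionRing (PowerSeries ℤ_[p])) r) =
        algebraMap (PowerSeries ℤ_[p]) (FractionRing (PowerSeries ℤ_[p])) r')
    (hσγ : ∀ m n : ℕ, m ≠ n →
      (⇑σ)^[m] (algebraMap (PowerSeries ℤ_[p]) (FractionRing (PowerSeries ℤ_[p]))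
          (1 + PowerSeries.X)) ≠
        (⇑σ)^[n] (algebraMap (PowerSeries ℤ_[p]) (FractionRing (PowerSeries ℤ_[p]))
          (1 + PowerSeries.X)))
    {L : Type*} [Ring L] (S : SkewLaurent (FractionRing (PowerSeries ℤ_[p])) L (⇑σ))
    (I : Ideal L) (hIright : ∀ x ∈ I, ∀ b : L, x * b ∈ I) :
    I = ⊥ ∨ I = ⊤ := by
  by_cases hbot : I = ⊥
  · exact Or.inl hbot
  · right
    obtain ⟨x, hxI, hx0⟩ := Submodule.exists_mem_ne_zero_of_ne_bot hbot
    set γ : FractionRing (PowerSeries ℤ_[p]) :=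
      algebraMap (PowerSeries ℤ_[p]) (FractionRing (PowerSeries ℤ_[p])) (1 + PowerSeries.X)
    have hγ := sk_zpow_ne σ γ hσγ
    have hone := sk_one_mem σ S γ hγ I hIright ((S.coeff x).support.card) x hxI hx0 le_rfl
    exact (Ideal.eq_top_iff_one I).mpr hone
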